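/- Let 𝒢 be a jump-diffusion operator that is polynomial on E, and let f ∈ C^k(ℝ^d) satisfy |f(x)| ≤ c(1 + ‖x‖^k) on ℝ^d for some constant c and integer k ≥ 2. Then 𝒢f(x) is well-defined and locally bounded on E. In particular, the Taylor remainder g(x,ξ) = f(x+ξ) − Σ_{|α|≤k−1} (∂^α f(x)/α!) ξ^α satisfies |g(x,ξ)| ≤ ‖ξ‖^k M(x) for all ξ ∈ ℝ^d, for some continuous function M on ℝ^d. -/

import Mathlib

open MeasureTheory MvPolynomial Filter Set

noncomputable section

/-- The jump-diffusion operator. -/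
def jdOp {d : ℕ} (a : (Fin d → ℝ) → Matrix (Fin d) (Fin d) ℝ)
    (b : (Fin d → ℝ) → Fin d → ℝ) (ν : (Fin d → ℝ) → Measure (Fin d → ℝ))
    (f : (Fin d → ℝ) → ℝ) (x : Fin d → ℝ) : ℝ :=
  (1 / 2) * ∑ i, ∑ j, a x i j *
      fderiv ℝ (fun y => fderiv ℝ f y (Pi.single j 1)) x (Pi.single i 1)
    + ∑ i, b x i * fderiv ℝ f x (Pi.single i 1)
    + ∫ ξ, (f (x + ξ) - f x - ∑ i, ξ i * fderiv ℝ f x (Pi.single i 1)) ∂(ν x)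


set_option maxHeartbeats 1000000

variable {d : ℕ}

lemma clm_sum_single (L : (Fin d → ℝ) →L[ℝ] ℝ) (ξ : Fin d → ℝ) :
    ∑ i, ξ i * L (Pi.single i 1) = L ξ := by
  conv_rhs => rw [← Finset.univ_sum_single ξ, map_sum]
  refine Finset.sum_congr rfl fun i _ => ?_
  have : Pi.single i (ξ i) = ξ i • (Pi.single i (1:ℝ) : Fin d → ℝ) := by
    funext j
    by_cases h : j = i <;> simp [Pi.single_apply, h]
  rw [this, L.map_smul, smul_eq_mul]

lemma sq_norm_le_sum_sq (u : Fin d → ℝ) : ‖u‖ ^ 2 ≤ ∑ i, (u i) ^ 2 := by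
  have h1 : ‖u‖ ≤ Real.sqrt (∑ i, (u i) ^ 2) := by
    rw [pi_norm_le_iff_of_nonneg (Real.sqrt_nonneg _)]
    intro i
    have : ‖u i‖ = Real.sqrt ((u i) ^ 2) := by
      rw [Real.sqrt_sq_eq_abs]; rfl
    rw [this]
    exact Real.sqrt_le_sqrt (Finset.single_le_sum (fun j _ => sq_nonneg (u j)) (Finset.mem_univ i))
  calc ‖u‖ ^ 2 ≤ Real.sqrt (∑ i, (u i) ^ 2) ^ 2 := by
        exact pow_le_pow_left₀ (norm_nonneg _) h1 2
    _ = ∑ i, (u i) ^ 2 := Real.sq_sqrt (Finset.sum_nonneg fun j _ => sq_nonneg (u j))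

lemma pow_le_sq_add_pow {t : ℝ} (ht : 0 ≤ t) {j n : ℕ} (hj : 2 ≤ j) (hjn : j ≤ n) :
    t ^ j ≤ t ^ 2 + t ^ n := by
  rcases le_total t 1 with h | h
  · have := pow_le_pow_of_le_one ht h hj
    nlinarith [pow_nonneg ht n]
  · have := pow_le_pow_right₀ h hjn
    nlinarith [pow_nonneg ht 2]

/-- continuous sup over the closed unit ball around each point -/
lemma exists_sup_ball (F : (Fin d → ℝ) → ℝ) (hF : Continuous F) :
    ∃ S : (Fin d → ℝ) → ℝ, Continuous S ∧ (∀ x, 0 ≤ S x) ∧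
      ∀ x y, dist y x ≤ 1 → |F y| ≤ S x := by
  haveI : CompactSpace (Metric.closedBall (0 : Fin d → ℝ) 1) :=
    isCompact_iff_compactSpace.mp (isCompact_closedBall _ _)
  set G : C((Fin d → ℝ), C(Metric.closedBall (0 : Fin d → ℝ) 1, ℝ)) :=
    ContinuousMap.curry ⟨fun q => F (q.1 + q.2.1),
      hF.comp (continuous_fst.add (continuous_subtype_val.comp continuous_snd))⟩ with hG
  refine ⟨fun x => ‖G x‖, continuous_norm.comp G.continuous, fun x => norm_nonneg _, ?_⟩
  intro x y hxy
  have hu : y - x ∈ Metric.closedBall (0 : Fin d → ℝ) 1 := by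
    simpa [dist_eq_norm] using hxy
  have : F y = (G x) ⟨y - x, hu⟩ := by simp [hG]
  rw [this]
  exact ContinuousMap.norm_coe_le_norm (G x) _

lemma taylor_unit_bound {n : ℕ} {f : (Fin d → ℝ) → ℝ} (hf : ContDiff ℝ ((n+1 : ℕ) : ℕ∞) f) :
    ∃ M : (Fin d → ℝ) → ℝ, Continuous M ∧ (∀ x, 0 ≤ M x) ∧
      ∀ x ξ : Fin d → ℝ, ‖ξ‖ ≤ 1 →
        |f (x + ξ) - ∑ j ∈ Finset.range (n+1),
            (1 / (j.factorial : ℝ)) * iteratedFDeriv ℝ j f x (fun _ => ξ)| ≤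
          M x * ‖ξ‖ ^ (n+1) := by
  obtain ⟨S, hScont, hSnn, hS⟩ := exists_sup_ball
    (fun y => ‖iteratedFDeriv ℝ (n+1) f y‖)
    ((hf.continuous_iteratedFDeriv (by exact_mod_cast le_rfl)).norm)
  refine ⟨S, hScont, hSnn, ?_⟩
  intro x ξ hξ
  set g : ℝ → ℝ := fun t => f (x + t • ξ) with hg
  have hA : ∀ t : ℝ, HasDerivAt (fun s : ℝ => x + s • ξ) ξ t := by
    intro t
    simpa using ((hasDerivAt_id t).smul_const ξ).const_add x
  have key : ∀ (j : ℕ), j < n+1 → ∀ t : ℝ,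
      HasDerivAt (fun s => iteratedFDeriv ℝ j f (x + s • ξ) (fun _ => ξ))
        (iteratedFDeriv ℝ (j+1) f (x + t • ξ) (fun _ => ξ)) t := by
    intro j hj t
    have hdiff : DifferentiableAt ℝ (iteratedFDeriv ℝ j f) (x + t • ξ) :=
      (ContDiff.differentiable_iteratedFDeriv (by exact_mod_cast hj) hf).differentiableAt
    have h2 : HasDerivAt (fun s => iteratedFDeriv ℝ j f (x + s • ξ))
        (fderiv ℝ (iteratedFDeriv ℝ j f) (x + t • ξ) ξ) t :=
      hdiff.hasFDerivAt.comp_hasDerivAt t (hA t)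
    have h3 := (ContinuousMultilinearMap.apply ℝ (fun _ : Fin j => (Fin d → ℝ)) ℝ
        (fun _ => ξ)).hasFDerivAt.comp_hasDerivAt t h2
    have hv : iteratedFDeriv ℝ (j+1) f (x + t • ξ) (fun _ => ξ) =
        (ContinuousMultilinearMap.apply ℝ (fun _ : Fin j => (Fin d → ℝ)) ℝ (fun _ => ξ))
          (fderiv ℝ (iteratedFDeriv ℝ j f) (x + t • ξ) ξ) := by
      rw [iteratedFDeriv_succ_apply_left]; rfl
    rw [hv]; exact h3
  have keyD : ∀ j, j ≤ n+1 → ∀ t : ℝ,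
      iteratedDeriv j g t = iteratedFDeriv ℝ j f (x + t • ξ) (fun _ => ξ) := by
    intro j
    induction j with
    | zero => intro _ t; simp [hg]
    | succ j ih =>
      intro hj t
      rw [iteratedDeriv_succ]
      have hje : iteratedDeriv j g = fun s => iteratedFDeriv ℝ j f (x + s • ξ) (fun _ => ξ) :=
        funext fun s => ih (by omega) s
      rw [hje]
      exact (key j (by omega) t).deriv
  have keyW : ∀ j, j ≤ n+1 → ∀ t ∈ Icc (0:ℝ) 1,
      iteratedDerivWithin j g (Icc 0 1) t = iteratedFDeriv ℝ j f (x + t • ξ) (fun _ => ξ) := by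
    intro j
    induction j with
    | zero => intro _ t _; simp [hg]
    | succ j ih =>
      intro hj t ht
      have hu : UniqueDiffWithinAt ℝ (Icc (0:ℝ) 1) t := (uniqueDiffOn_Icc zero_lt_one) t ht
      rw [iteratedDerivWithin_succ]
      have hcongr : derivWithin (iteratedDerivWithin j g (Icc 0 1)) (Icc 0 1) t
          = derivWithin (fun s => iteratedFDeriv ℝ j f (x + s • ξ) (fun _ => ξ)) (Icc 0 1) t :=
        derivWithin_congr (fun s hs => ih (by omega) s hs) (ih (by omega) t ht)
      rw [hcongr, (key j (by omega) t).differentiableAt.derivWithin hu]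
      exact (key j (by omega) t).deriv
  have hf' : ContDiff ℝ ((n : WithTop ℕ∞) + 1) f := by exact_mod_cast hf
  have hinner : ContDiff ℝ ((n : WithTop ℕ∞) + 1) (fun s : ℝ => x + s • ξ) :=
    contDiff_const.add (contDiff_id.smul contDiff_const)
  have hgC : ContDiffOn ℝ ((n : WithTop ℕ∞) + 1) g (Icc 0 1) := (hf'.comp hinner).contDiffOn
  have hC : ∀ t ∈ Icc (0:ℝ) 1,
      ‖iteratedDerivWithin (n+1) g (Icc 0 1) t‖ ≤ S x * ‖ξ‖^(n+1) := by
    intro t ht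
    rw [keyW (n+1) le_rfl t ht]
    have h1 : ‖iteratedFDeriv ℝ (n+1) f (x + t • ξ) (fun _ => ξ)‖ ≤
        ‖iteratedFDeriv ℝ (n+1) f (x + t • ξ)‖ * ∏ _i : Fin (n+1), ‖ξ‖ :=
      ContinuousMultilinearMap.le_opNorm _ _
    rw [Finset.prod_const, Finset.card_univ, Fintype.card_fin] at h1
    refine h1.trans (mul_le_mul_of_nonneg_right ?_ (pow_nonneg (norm_nonneg _) _))
    have hd : dist (x + t • ξ) x ≤ 1 := by
      rw [dist_eq_norm, add_sub_cancel_left, norm_smul]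
      calc ‖t‖ * ‖ξ‖ ≤ 1 * 1 := by
            refine mul_le_mul ?_ hξ (norm_nonneg _) zero_le_one
            rw [Real.norm_eq_abs, abs_of_nonneg ht.1]; exact ht.2
        _ = 1 := mul_one 1
    exact (le_abs_self _).trans (hS x (x + t • ξ) hd)
  have htay := taylor_mean_remainder_bound zero_le_one hgC (right_mem_Icc.mpr zero_le_one) hC
  have hT : taylorWithinEval g n (Icc 0 1) 0 1 =
      ∑ j ∈ Finset.range (n+1), (1/(j.factorial : ℝ)) * iteratedFDeriv ℝ j f x (fun _ => ξ) := by
    rw [taylor_within_apply]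
    refine Finset.sum_congr rfl fun j hj => ?_
    have hj' : j ≤ n + 1 := by
      have := Finset.mem_range.mp hj; omega
    rw [keyW j hj' 0 (left_mem_Icc.mpr zero_le_one)]
    have : x + (0:ℝ) • ξ = x := by simp
    rw [this]
    simp [smul_eq_mul, one_div]
  have hg1 : g 1 = f (x + ξ) := by simp [hg]
  rw [hg1, hT] at htay
  have : |f (x + ξ) - ∑ j ∈ Finset.range (n+1),
      (1 / (j.factorial : ℝ)) * iteratedFDeriv ℝ j f x (fun _ => ξ)| ≤
      S x * ‖ξ‖ ^ (n + 1) * (1 - 0) ^ (n + 1) / (n.factorial : ℝ) := htay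
  refine this.trans ?_
  rw [sub_zero, one_pow, mul_one]
  refine div_le_self (mul_nonneg (hSnn x) (pow_nonneg (norm_nonneg _) _)) ?_
  exact_mod_cast Nat.one_le_iff_ne_zero.mpr (Nat.factorial_ne_zero n)

lemma global_taylor_bound {k : ℕ} (hk : 2 ≤ k) {f : (Fin d → ℝ) → ℝ}
    (hf : ContDiff ℝ (k : ℕ∞) f) {c : ℝ} (hgrowth : ∀ x, |f x| ≤ c * (1 + ‖x‖ ^ k)) :
    ∃ M : (Fin d → ℝ) → ℝ, Continuous M ∧ (∀ x, 0 ≤ M x) ∧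
      ∀ x ξ : Fin d → ℝ,
        |f (x + ξ) - ∑ j ∈ Finset.range k,
            (1 / (j.factorial : ℝ)) * iteratedFDeriv ℝ j f x (fun _ => ξ)| ≤
          ‖ξ‖ ^ k * M x := by
  have hc : 0 ≤ c := by
    have h0 := hgrowth 0
    rw [norm_zero, zero_pow (by omega : k ≠ 0)] at h0
    have := abs_nonneg (f 0); linarith
  obtain ⟨n, rfl⟩ : ∃ n, k = n + 1 := ⟨k - 1, by omega⟩
  obtain ⟨M₁, hM₁c, hM₁nn, hM₁⟩ := taylor_unit_bound (f := f) hf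
  set M : (Fin d → ℝ) → ℝ := fun x =>
    M₁ x + (c * (1 + (1 + ‖x‖) ^ (n+1)) +
      ∑ j ∈ Finset.range (n+1), ‖iteratedFDeriv ℝ j f x‖) with hM
  have hMc : Continuous M := by
    refine hM₁c.add (Continuous.add ?_ ?_)
    · exact continuous_const.mul (continuous_const.add
        ((continuous_const.add continuous_norm).pow _))
    · exact continuous_finset_sum _ fun j hj =>
        (hf.continuous_iteratedFDeriv (by
          have := Finset.mem_range.mp hj
          exact_mod_cast Nat.le_of_lt_succ this |>.trans (Nat.le_succ n) |> Nat.cast_le.mpr)).norm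
  have hrest_nn : ∀ x, 0 ≤ c * (1 + (1 + ‖x‖) ^ (n+1)) +
      ∑ j ∈ Finset.range (n+1), ‖iteratedFDeriv ℝ j f x‖ := by
    intro x
    have h1 : (0:ℝ) ≤ c * (1 + (1 + ‖x‖) ^ (n+1)) := by positivity
    have h2 : (0:ℝ) ≤ ∑ j ∈ Finset.range (n+1), ‖iteratedFDeriv ℝ j f x‖ :=
      Finset.sum_nonneg fun j _ => norm_nonneg _
    linarith
  have hMnn : ∀ x, 0 ≤ M x := fun x => add_nonneg (hM₁nn x) (hrest_nn x)
  refine ⟨M, hMc, hMnn, ?_⟩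
  intro x ξ
  rcases le_total ‖ξ‖ 1 with hξ | hξ
  · have := hM₁ x ξ hξ
    have hle : M₁ x * ‖ξ‖ ^ (n+1) ≤ ‖ξ‖ ^ (n+1) * M x := by
      have h0 := hrest_nn x
      have h1 : M₁ x ≤ M x := by simp only [hM]; linarith
      have h2 : (0:ℝ) ≤ ‖ξ‖ ^ (n+1) := pow_nonneg (norm_nonneg _) _
      nlinarith [hM₁nn x]
    exact this.trans hle
  · -- large ξ
    have hd1 : |f (x + ξ)| ≤ ‖ξ‖ ^ (n+1) * (c * (1 + (1 + ‖x‖) ^ (n+1))) := by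
      have h1 : ‖x + ξ‖ ≤ (1 + ‖x‖) * ‖ξ‖ := by
        have h2 : ‖x‖ ≤ ‖x‖ * ‖ξ‖ := le_mul_of_one_le_right (norm_nonneg _) hξ
        calc ‖x + ξ‖ ≤ ‖x‖ + ‖ξ‖ := norm_add_le _ _
          _ ≤ ‖x‖ * ‖ξ‖ + ‖ξ‖ := by linarith
          _ = (1 + ‖x‖) * ‖ξ‖ := by ring
      have h3 : ‖x + ξ‖ ^ (n+1) ≤ (1 + ‖x‖) ^ (n+1) * ‖ξ‖ ^ (n+1) := by
        calc ‖x + ξ‖ ^ (n+1) ≤ ((1 + ‖x‖) * ‖ξ‖) ^ (n+1) :=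
              pow_le_pow_left₀ (norm_nonneg _) h1 _
          _ = (1 + ‖x‖) ^ (n+1) * ‖ξ‖ ^ (n+1) := mul_pow _ _ _
      have h4 : (1:ℝ) ≤ ‖ξ‖ ^ (n+1) := one_le_pow₀ hξ
      calc |f (x + ξ)| ≤ c * (1 + ‖x + ξ‖ ^ (n+1)) := hgrowth _
        _ ≤ c * (‖ξ‖ ^ (n+1) + (1 + ‖x‖) ^ (n+1) * ‖ξ‖ ^ (n+1)) := by
            refine mul_le_mul_of_nonneg_left ?_ hc; linarith
        _ = ‖ξ‖ ^ (n+1) * (c * (1 + (1 + ‖x‖) ^ (n+1))) := by ring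
    have hd2 : |∑ j ∈ Finset.range (n+1),
        (1 / (j.factorial : ℝ)) * iteratedFDeriv ℝ j f x (fun _ => ξ)| ≤
        ‖ξ‖ ^ (n+1) * ∑ j ∈ Finset.range (n+1), ‖iteratedFDeriv ℝ j f x‖ := by
      calc |∑ j ∈ Finset.range (n+1),
          (1 / (j.factorial : ℝ)) * iteratedFDeriv ℝ j f x (fun _ => ξ)|
          ≤ ∑ j ∈ Finset.range (n+1),
            |(1 / (j.factorial : ℝ)) * iteratedFDeriv ℝ j f x (fun _ => ξ)| :=
            Finset.abs_sum_le_sum_abs _ _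
        _ ≤ ∑ j ∈ Finset.range (n+1), ‖iteratedFDeriv ℝ j f x‖ * ‖ξ‖ ^ (n+1) := by
            refine Finset.sum_le_sum fun j hj => ?_
            have hjk : j ≤ n + 1 := by
              have := Finset.mem_range.mp hj; omega
            have hb : |iteratedFDeriv ℝ j f x (fun _ => ξ)| ≤
                ‖iteratedFDeriv ℝ j f x‖ * ‖ξ‖ ^ j := by
              have h5 := ContinuousMultilinearMap.le_opNorm (iteratedFDeriv ℝ j f x)
                (fun _ : Fin j => ξ)
              rwa [Finset.prod_const, Finset.card_univ, Fintype.card_fin] at h5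
            have hfac : (1 / (j.factorial : ℝ)) ≤ 1 := by
              rw [div_le_one (by positivity)]
              exact_mod_cast Nat.one_le_iff_ne_zero.mpr (Nat.factorial_ne_zero j)
            have hfacnn : (0:ℝ) ≤ 1 / (j.factorial : ℝ) := by positivity
            calc |(1 / (j.factorial : ℝ)) * iteratedFDeriv ℝ j f x (fun _ => ξ)|
                = (1 / (j.factorial : ℝ)) * |iteratedFDeriv ℝ j f x (fun _ => ξ)| := by
                  rw [abs_mul, abs_of_nonneg hfacnn]
              _ ≤ 1 * (‖iteratedFDeriv ℝ j f x‖ * ‖ξ‖ ^ j) := by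
                  refine mul_le_mul hfac hb (abs_nonneg _) zero_le_one
              _ = ‖iteratedFDeriv ℝ j f x‖ * ‖ξ‖ ^ j := one_mul _
              _ ≤ ‖iteratedFDeriv ℝ j f x‖ * ‖ξ‖ ^ (n+1) := by
                  refine mul_le_mul_of_nonneg_left ?_ (norm_nonneg _)
                  exact pow_le_pow_right₀ hξ hjk
        _ = ‖ξ‖ ^ (n+1) * ∑ j ∈ Finset.range (n+1), ‖iteratedFDeriv ℝ j f x‖ := by
            rw [← Finset.sum_mul, mul_comm]
    calc |f (x + ξ) - ∑ j ∈ Finset.range (n+1),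
          (1 / (j.factorial : ℝ)) * iteratedFDeriv ℝ j f x (fun _ => ξ)|
        ≤ |f (x + ξ)| + |∑ j ∈ Finset.range (n+1),
          (1 / (j.factorial : ℝ)) * iteratedFDeriv ℝ j f x (fun _ => ξ)| := abs_sub _ _
      _ ≤ ‖ξ‖ ^ (n+1) * (c * (1 + (1 + ‖x‖) ^ (n+1))) +
          ‖ξ‖ ^ (n+1) * ∑ j ∈ Finset.range (n+1), ‖iteratedFDeriv ℝ j f x‖ := by
          exact add_le_add hd1 hd2
      _ = ‖ξ‖ ^ (n+1) * (c * (1 + (1 + ‖x‖) ^ (n+1)) +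
          ∑ j ∈ Finset.range (n+1), ‖iteratedFDeriv ℝ j f x‖) := by ring
      _ ≤ ‖ξ‖ ^ (n+1) * M x := by
          refine mul_le_mul_of_nonneg_left ?_ (pow_nonneg (norm_nonneg _) _)
          simp only [hM]
          have := hM₁nn x; linarith

lemma fderiv_coord (i : Fin d) (y : Fin d → ℝ) :
    fderiv ℝ (fun z : Fin d → ℝ => z i) y = ContinuousLinearMap.proj i :=
  (ContinuousLinearMap.proj i : (Fin d → ℝ) →L[ℝ] ℝ).fderiv

lemma single_app (l j : Fin d) : (Pi.single l (1:ℝ) : Fin d → ℝ) j = if j = l then 1 else 0 := by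
  rw [Pi.single_apply]

lemma jdOp_X (a : (Fin d → ℝ) → Matrix (Fin d) (Fin d) ℝ)
    (b : (Fin d → ℝ) → Fin d → ℝ) (ν : (Fin d → ℝ) → Measure (Fin d → ℝ))
    (i : Fin d) (y : Fin d → ℝ) :
    jdOp a b ν (fun z => MvPolynomial.eval z (MvPolynomial.X i)) y = b y i := by
  have hfun : (fun z : Fin d → ℝ => MvPolynomial.eval z (MvPolynomial.X i))
      = fun z : Fin d → ℝ => z i := by
    funext z; simp
  rw [hfun]
  unfold jdOp
  simp only [fderiv_coord, ContinuousLinearMap.proj_apply]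
  simp only [fderiv_const, Pi.zero_apply, ContinuousLinearMap.zero_apply, mul_zero,
    Finset.sum_const_zero, mul_zero, add_zero, zero_add, single_app,
    Pi.add_apply, mul_ite, mul_one, mul_zero, Finset.sum_ite_eq', Finset.mem_univ, if_true]
  simp

lemma jdOp_XX (a : (Fin d → ℝ) → Matrix (Fin d) (Fin d) ℝ)
    (b : (Fin d → ℝ) → Fin d → ℝ) (ν : (Fin d → ℝ) → Measure (Fin d → ℝ))
    (i : Fin d) (y : Fin d → ℝ) :
    jdOp a b ν (fun z => MvPolynomial.eval z (MvPolynomial.X i * MvPolynomial.X i)) y =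
      a y i i + 2 * (b y i * y i) + ∫ ξ, (ξ i)^2 ∂(ν y) := by
  have hfun : (fun z : Fin d → ℝ => MvPolynomial.eval z (MvPolynomial.X i * MvPolynomial.X i))
      = fun z : Fin d → ℝ => z i * z i := by
    funext z; simp
  rw [hfun]
  have happ : ∀ (w v : Fin d → ℝ),
      fderiv ℝ (fun z : Fin d → ℝ => z i * z i) w v = 2 * w i * v i := by
    intro w v
    have h := ((ContinuousLinearMap.proj i : (Fin d → ℝ) →L[ℝ] ℝ).hasFDerivAt (x := w)).mul
      ((ContinuousLinearMap.proj i : (Fin d → ℝ) →L[ℝ] ℝ).hasFDerivAt (x := w))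
    have h' : HasFDerivAt (fun z : Fin d → ℝ => z i * z i)
        ((ContinuousLinearMap.proj i : (Fin d → ℝ) →L[ℝ] ℝ) w •
            (ContinuousLinearMap.proj i : (Fin d → ℝ) →L[ℝ] ℝ) +
          (ContinuousLinearMap.proj i : (Fin d → ℝ) →L[ℝ] ℝ) w •
            (ContinuousLinearMap.proj i : (Fin d → ℝ) →L[ℝ] ℝ)) w := h
    rw [h'.fderiv]
    simp only [ContinuousLinearMap.add_apply, ContinuousLinearMap.smul_apply,
      ContinuousLinearMap.proj_apply, smul_eq_mul]
    ring
  have hf2 : ∀ (c : ℝ) (w v : Fin d → ℝ),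
      fderiv ℝ (fun w : Fin d → ℝ => 2 * w i * c) w v = 2 * v i * c := by
    intro c w v
    have h0 := (((ContinuousLinearMap.proj i : (Fin d → ℝ) →L[ℝ] ℝ).hasFDerivAt
      (x := w)).const_mul 2).mul_const c
    have h : HasFDerivAt (fun w : Fin d → ℝ => 2 * w i * c)
        (c • ((2 : ℝ) • (ContinuousLinearMap.proj i : (Fin d → ℝ) →L[ℝ] ℝ))) w := h0
    rw [h.fderiv]
    simp only [ContinuousLinearMap.smul_apply, ContinuousLinearMap.proj_apply, smul_eq_mul]
    ring
  unfold jdOp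
  simp only [happ, hf2, Pi.add_apply]
  simp only [single_app, mul_ite, mul_one, mul_zero, ite_mul, zero_mul, one_mul,
    Finset.sum_ite_eq', Finset.sum_ite_eq, Finset.mem_univ, if_true]
  have hint : (fun ξ : Fin d → ℝ => (y i + ξ i) * (y i + ξ i) - y i * y i - ξ i * (2 * y i))
      = fun ξ : Fin d → ℝ => (ξ i)^2 := by
    funext ξ; ring
  rw [hint]
  ring_nf

lemma psd_quad {M : Matrix (Fin d) (Fin d) ℝ} (hM : M.PosSemidef) (i j : Fin d) (r : ℝ) :
    0 ≤ M i i + r * M i j + r * M j i + r * r * M j j := by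
  have h := hM.dotProduct_mulVec_nonneg (Pi.single i (1:ℝ) + Pi.single j r : Fin d → ℝ)
  rw [star_trivial, Matrix.mulVec_add, dotProduct_add, add_dotProduct,
    add_dotProduct] at h
  simp only [Matrix.mulVec_single, single_dotProduct, Pi.smul_apply, op_smul_eq_mul,
    Matrix.col_apply] at h
  ring_nf at h ⊢
  linarith

lemma psd_diag_nonneg {M : Matrix (Fin d) (Fin d) ℝ} (hM : M.PosSemidef) (i : Fin d) :
    0 ≤ M i i := by
  have := psd_quad hM i i 0
  simpa using this

lemma psd_abs_le {M : Matrix (Fin d) (Fin d) ℝ} (hM : M.PosSemidef) (i j : Fin d) :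
    |M i j| ≤ (M i i + M j j) / 2 := by
  have hsym : M j i = M i j := by
    have h := hM.1
    have := congrFun (congrFun h.symm j) i
    simpa [Matrix.conjTranspose_apply] using this
  have h1 := psd_quad hM i j 1
  have h2 := psd_quad hM i j (-1)
  rw [hsym] at h1 h2
  rw [abs_le]
  constructor <;> nlinarith

lemma term_bound (f : (Fin d → ℝ) → ℝ) (j : ℕ) (x ξ : Fin d → ℝ) :
    |(1 / (j.factorial : ℝ)) * iteratedFDeriv ℝ j f x (fun _ => ξ)| ≤
      ‖iteratedFDeriv ℝ j f x‖ * ‖ξ‖ ^ j := by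
  have hb : |iteratedFDeriv ℝ j f x (fun _ => ξ)| ≤ ‖iteratedFDeriv ℝ j f x‖ * ‖ξ‖ ^ j := by
    have h5 := ContinuousMultilinearMap.le_opNorm (iteratedFDeriv ℝ j f x) (fun _ : Fin j => ξ)
    rwa [Finset.prod_const, Finset.card_univ, Fintype.card_fin] at h5
  have hfac : (1 / (j.factorial : ℝ)) ≤ 1 := by
    rw [div_le_one (by positivity)]
    exact_mod_cast Nat.one_le_iff_ne_zero.mpr (Nat.factorial_ne_zero j)
  have hfacnn : (0:ℝ) ≤ 1 / (j.factorial : ℝ) := by positivity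
  calc |(1 / (j.factorial : ℝ)) * iteratedFDeriv ℝ j f x (fun _ => ξ)|
      = (1 / (j.factorial : ℝ)) * |iteratedFDeriv ℝ j f x (fun _ => ξ)| := by
        rw [abs_mul, abs_of_nonneg hfacnn]
    _ ≤ 1 * (‖iteratedFDeriv ℝ j f x‖ * ‖ξ‖ ^ j) :=
        mul_le_mul hfac hb (abs_nonneg _) zero_le_one
    _ = ‖iteratedFDeriv ℝ j f x‖ * ‖ξ‖ ^ j := one_mul _

lemma taylor_decomp {k : ℕ} (hk : 2 ≤ k) (f : (Fin d → ℝ) → ℝ) (x ξ : Fin d → ℝ) :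
    f (x + ξ) - f x - fderiv ℝ f x ξ =
      (f (x + ξ) - ∑ j ∈ Finset.range k,
        (1 / (j.factorial : ℝ)) * iteratedFDeriv ℝ j f x (fun _ => ξ))
      + ∑ j ∈ Finset.Ico 2 k, (1 / (j.factorial : ℝ)) * iteratedFDeriv ℝ j f x (fun _ => ξ) := by
  have hsum : ∑ j ∈ Finset.range k,
      (1 / (j.factorial : ℝ)) * iteratedFDeriv ℝ j f x (fun _ => ξ)
      = f x + fderiv ℝ f x ξ +
        ∑ j ∈ Finset.Ico 2 k, (1 / (j.factorial : ℝ)) * iteratedFDeriv ℝ j f x (fun _ => ξ) := by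
    rw [Finset.range_eq_Ico, Finset.sum_eq_sum_Ico_succ_bot (by omega : 0 < k),
      Finset.sum_eq_sum_Ico_succ_bot (by omega : 1 < k)]
    rw [iteratedFDeriv_zero_apply, iteratedFDeriv_one_apply]
    simp [Nat.factorial]
    ring
  rw [hsum]; ring

lemma jump_integrand_integrable {k : ℕ} (hk : 2 ≤ k) {f : (Fin d → ℝ) → ℝ}
    (hf : ContDiff ℝ (k : ℕ∞) f) {M : (Fin d → ℝ) → ℝ}
    (hM : ∀ x ξ : Fin d → ℝ,
      |f (x + ξ) - ∑ j ∈ Finset.range k,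
        (1 / (j.factorial : ℝ)) * iteratedFDeriv ℝ j f x (fun _ => ξ)| ≤ ‖ξ‖ ^ k * M x)
    (μ : Measure (Fin d → ℝ)) (hmomμ : ∀ n : ℕ, 2 ≤ n → Integrable (fun ξ => ‖ξ‖ ^ n) μ)
    (x : Fin d → ℝ) :
    Integrable (fun ξ => f (x + ξ) - f x - ∑ i, ξ i * fderiv ℝ f x (Pi.single i 1)) μ := by
  have hint : Integrable (fun ξ : Fin d → ℝ =>
      M x * ‖ξ‖ ^ k + ∑ j ∈ Finset.Ico 2 k, ‖iteratedFDeriv ℝ j f x‖ * ‖ξ‖ ^ j) μ := by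
    refine Integrable.add ((hmomμ k hk).const_mul _) ?_
    exact integrable_finset_sum _ fun j hj =>
      (hmomμ j (Finset.mem_Ico.mp hj).1).const_mul _
  refine hint.mono' ?_ ?_
  · have hcont : Continuous (fun ξ : Fin d → ℝ =>
        f (x + ξ) - f x - ∑ i, ξ i * fderiv ℝ f x (Pi.single i 1)) := by
      refine Continuous.sub (Continuous.sub ?_ continuous_const) ?_
      · exact (hf.continuous).comp (continuous_const.add continuous_id)
      · exact continuous_finset_sum _ fun i _ => (continuous_apply i).mul continuous_const
    exact hcont.aestronglyMeasurable
  · filter_upwards with ξ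
    rw [Real.norm_eq_abs]
    have hd : f (x + ξ) - f x - ∑ i, ξ i * fderiv ℝ f x (Pi.single i 1) =
        (f (x + ξ) - ∑ j ∈ Finset.range k,
          (1 / (j.factorial : ℝ)) * iteratedFDeriv ℝ j f x (fun _ => ξ))
        + ∑ j ∈ Finset.Ico 2 k, (1 / (j.factorial : ℝ)) * iteratedFDeriv ℝ j f x (fun _ => ξ) := by
      rw [clm_sum_single]
      exact taylor_decomp hk f x ξ
    rw [hd]
    calc |_ + _| ≤ |f (x + ξ) - ∑ j ∈ Finset.range k,
          (1 / (j.factorial : ℝ)) * iteratedFDeriv ℝ j f x (fun _ => ξ)|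
        + |∑ j ∈ Finset.Ico 2 k,
            (1 / (j.factorial : ℝ)) * iteratedFDeriv ℝ j f x (fun _ => ξ)| := abs_add_le _ _
      _ ≤ M x * ‖ξ‖ ^ k + ∑ j ∈ Finset.Ico 2 k, ‖iteratedFDeriv ℝ j f x‖ * ‖ξ‖ ^ j := by
          refine add_le_add ?_ ?_
          · rw [mul_comm]; exact hM x ξ
          · refine (Finset.abs_sum_le_sum_abs _ _).trans ?_
            exact Finset.sum_le_sum fun j _ => term_bound f j x ξ

/-- The comparison polynomial function `z ↦ (∑ (z i - x i)²)^k`. -/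
def Qf (k : ℕ) (x : Fin d → ℝ) : (Fin d → ℝ) → ℝ :=
  fun z => (∑ i, (z i - x i) ^ 2) ^ k

lemma Qf_contDiff (k : ℕ) (x : Fin d → ℝ) (n : ℕ∞) : ContDiff ℝ n (Qf k x) :=
  (ContDiff.sum fun i _ =>
    ((contDiff_apply ℝ ℝ i).sub contDiff_const).pow 2).pow k

lemma Qf_nonneg (k : ℕ) (x : Fin d → ℝ) (z : Fin d → ℝ) : 0 ≤ Qf k x z :=
  pow_nonneg (Finset.sum_nonneg fun i _ => sq_nonneg _) k

lemma Qf_le (k : ℕ) (x : Fin d → ℝ) (z : Fin d → ℝ) :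
    Qf k x z ≤ (d : ℝ) ^ k * ‖z - x‖ ^ (2 * k) := by
  have h1 : ∑ i, (z i - x i) ^ 2 ≤ (d : ℝ) * ‖z - x‖ ^ 2 := by
    calc ∑ i, (z i - x i) ^ 2 ≤ ∑ _i : Fin d, ‖z - x‖ ^ 2 := by
          refine Finset.sum_le_sum fun i _ => ?_
          have : |z i - x i| ≤ ‖z - x‖ := by
            have := norm_le_pi_norm (z - x) i
            simpa using this
          calc (z i - x i) ^ 2 = |z i - x i| ^ 2 := (sq_abs _).symm
            _ ≤ ‖z - x‖ ^ 2 := pow_le_pow_left₀ (abs_nonneg _) this 2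
      _ = (d : ℝ) * ‖z - x‖ ^ 2 := by
          rw [Finset.sum_const, Finset.card_univ, Fintype.card_fin, nsmul_eq_mul]
  calc Qf k x z ≤ ((d : ℝ) * ‖z - x‖ ^ 2) ^ k :=
        pow_le_pow_left₀ (Finset.sum_nonneg fun i _ => sq_nonneg _) h1 k
    _ = (d : ℝ) ^ k * ‖z - x‖ ^ (2 * k) := by
        rw [mul_pow, pow_mul]

lemma Qf_ge (k : ℕ) (x : Fin d → ℝ) (z : Fin d → ℝ) :
    ‖z - x‖ ^ (2 * k) ≤ Qf k x z := by
  have h1 : ‖z - x‖ ^ 2 ≤ ∑ i, (z i - x i) ^ 2 := by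
    have := sq_norm_le_sum_sq (z - x)
    simpa using this
  calc ‖z - x‖ ^ (2 * k) = (‖z - x‖ ^ 2) ^ k := by rw [pow_mul]
    _ ≤ (∑ i, (z i - x i) ^ 2) ^ k := pow_le_pow_left₀ (by positivity) h1 k

lemma Qf_grad_zero (k : ℕ) (x : Fin d → ℝ) : fderiv ℝ (Qf k x) x = 0 := by
  have hS : HasFDerivAt (fun z : Fin d → ℝ => ∑ i, (z i - x i) ^ 2)
      (0 : (Fin d → ℝ) →L[ℝ] ℝ) x := by
    have h : ∀ i : Fin d, HasFDerivAt (fun z : Fin d → ℝ => (z i - x i) ^ 2)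
        (0 : (Fin d → ℝ) →L[ℝ] ℝ) x := by
      intro i
      have h1 : HasFDerivAt (fun z : Fin d → ℝ => z i - x i)
          (ContinuousLinearMap.proj i : (Fin d → ℝ) →L[ℝ] ℝ) x :=
        (ContinuousLinearMap.proj i :
          (Fin d → ℝ) →L[ℝ] ℝ).hasFDerivAt.sub_const (x i)
      have h2 := h1.fun_mul h1
      have h3 : HasFDerivAt (fun z : Fin d → ℝ => (z i - x i) ^ 2)
          ((x i - x i) • (ContinuousLinearMap.proj i : (Fin d → ℝ) →L[ℝ] ℝ)
            + (x i - x i) • (ContinuousLinearMap.proj i : (Fin d → ℝ) →L[ℝ] ℝ)) x := by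
        simpa [pow_two] using h2
      simpa [sub_self] using h3
    have := HasFDerivAt.fun_sum (fun i (_ : i ∈ Finset.univ) => h i)
    simpa using this
  have hpow : ∀ j : ℕ, HasFDerivAt (fun z : Fin d → ℝ => (∑ i, (z i - x i) ^ 2) ^ j)
      (0 : (Fin d → ℝ) →L[ℝ] ℝ) x := by
    intro j
    induction j with
    | zero => simpa using hasFDerivAt_const (1:ℝ) x
    | succ j ih =>
      have h2 := ih.fun_mul hS
      have h3 : HasFDerivAt (fun z : Fin d → ℝ => (∑ i, (z i - x i) ^ 2) ^ (j+1))
          ((∑ i, (x i - x i) ^ 2) ^ j • (0 : (Fin d → ℝ) →L[ℝ] ℝ)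
            + (∑ i, (x i - x i) ^ 2) • (0 : (Fin d → ℝ) →L[ℝ] ℝ)) x := by
        simpa [pow_succ] using h2
      simpa using h3
  exact (hpow k).fderiv

lemma qf_bounds {k : ℕ} (hk : 1 ≤ k) (x : Fin d → ℝ) :
    ∃ (δ CB CA : ℝ), 0 < δ ∧ δ ≤ 1 ∧ 0 ≤ CB ∧ 0 ≤ CA ∧
      (∀ y : Fin d → ℝ, dist y x ≤ 1 → ∀ ξ : Fin d → ℝ,
        |Qf k x (y+ξ) - Qf k x y - fderiv ℝ (Qf k x) y ξ| ≤ CB * (‖ξ‖^2 + ‖ξ‖^(2*k))) ∧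
      (∀ y : Fin d → ℝ, dist y x ≤ δ → ∀ ξ : Fin d → ℝ,
        ‖ξ‖^(2*k) ≤ (4:ℝ)^k * (Qf k x (y+ξ) - Qf k x y - fderiv ℝ (Qf k x) y ξ)
          + CA * ‖ξ‖^2) := by
  obtain ⟨MQ, hMQc, hMQnn, hMQ⟩ := taylor_unit_bound (n := 1) (f := Qf k x)
    (Qf_contDiff k x 2)
  obtain ⟨S1, _, _, hS1⟩ := exists_sup_ball MQ hMQc
  have hgradc : Continuous fun y => ‖fderiv ℝ (Qf k x) y‖ :=
    ((Qf_contDiff k x 2).continuous_fderiv (by norm_num)).norm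
  obtain ⟨S2, _, hS2nn, hS2⟩ := exists_sup_ball _ hgradc
  -- δ from continuity of the gradient at x
  obtain ⟨δ0, hδ0pos, hδ0⟩ := Metric.continuousAt_iff.mp hgradc.continuousAt 1 one_pos
  set δ : ℝ := min (δ0/2) 1 with hδ
  have hδpos : 0 < δ := lt_min (by linarith) one_pos
  have hδle1 : δ ≤ 1 := min_le_right _ _
  have hgrad_small : ∀ y : Fin d → ℝ, dist y x ≤ δ → ‖fderiv ℝ (Qf k x) y‖ ≤ 1 := by
    intro y hy
    have h1 : dist y x < δ0 := lt_of_le_of_lt (hy.trans (min_le_left _ _)) (by linarith)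
    have := hδ0 h1
    rw [Qf_grad_zero, norm_zero] at this
    rw [Real.dist_eq, sub_zero] at this
    exact le_of_lt (lt_of_le_of_lt (le_abs_self _) this)
  set CB1 : ℝ := S1 x with hCB1
  set Cg : ℝ := S2 x with hCg
  set CB : ℝ := CB1 + ((d:ℝ)^k * 4^k + (d:ℝ)^k + Cg) with hCBdef
  have hCB1nn : 0 ≤ CB1 := le_trans (abs_nonneg _) (hS1 x x (by simp))
  have hCgnn : 0 ≤ Cg := hS2nn x
  have hdknn : (0:ℝ) ≤ (d:ℝ)^k := by positivity
  have h4knn : (0:ℝ) ≤ (4:ℝ)^k := by positivity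
  have hCBnn : 0 ≤ CB := by positivity
  set CA : ℝ := (4:ℝ)^k + (4:ℝ)^k * CB * (1 + (4:ℝ)^k) + (4:ℝ)^k * ((d:ℝ)^k + 1)
    with hCAdef
  have hCAnn : 0 ≤ CA := by positivity
  have htaylor2 : ∀ y : Fin d → ℝ, ∀ ξ : Fin d → ℝ, ‖ξ‖ ≤ 1 →
      |Qf k x (y+ξ) - Qf k x y - fderiv ℝ (Qf k x) y ξ| ≤ MQ y * ‖ξ‖^2 := by
    intro y ξ hξ
    have h := hMQ y ξ hξ
    have hsum : ∑ j ∈ Finset.range (1+1),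
        (1 / (j.factorial : ℝ)) * iteratedFDeriv ℝ j (Qf k x) y (fun _ => ξ)
        = Qf k x y + fderiv ℝ (Qf k x) y ξ := by
      rw [Finset.sum_range_succ, Finset.sum_range_one]
      rw [iteratedFDeriv_zero_apply, iteratedFDeriv_one_apply]
      norm_num
    rw [hsum] at h
    convert h using 2
    ring
  -- upper bound
  have hupper : ∀ y : Fin d → ℝ, dist y x ≤ 1 → ∀ ξ : Fin d → ℝ,
      |Qf k x (y+ξ) - Qf k x y - fderiv ℝ (Qf k x) y ξ| ≤ CB * (‖ξ‖^2 + ‖ξ‖^(2*k)) := by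
    intro y hy ξ
    have hnn2 : (0:ℝ) ≤ ‖ξ‖^2 := by positivity
    have hnn2k : (0:ℝ) ≤ ‖ξ‖^(2*k) := by positivity
    rcases le_total ‖ξ‖ 1 with hξ | hξ
    · have h := htaylor2 y ξ hξ
      have hMy : MQ y ≤ CB1 := le_trans (le_abs_self _) (hS1 x y hy)
      calc |Qf k x (y+ξ) - Qf k x y - fderiv ℝ (Qf k x) y ξ| ≤ MQ y * ‖ξ‖^2 := h
        _ ≤ CB1 * ‖ξ‖^2 := mul_le_mul_of_nonneg_right hMy hnn2
        _ ≤ CB * (‖ξ‖^2 + ‖ξ‖^(2*k)) := by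
            nlinarith [mul_nonneg hdknn h4knn, mul_nonneg hCgnn hnn2k,
              mul_nonneg (mul_nonneg hdknn h4knn) hnn2,
              mul_nonneg hdknn hnn2k, mul_nonneg hCB1nn hnn2k,
              mul_nonneg (mul_nonneg (mul_nonneg hdknn h4knn) hnn2) (le_refl (0:ℝ))]
    · -- ‖ξ‖ ≥ 1
      have hQ1 : Qf k x (y+ξ) ≤ (d:ℝ)^k * 4^k * ‖ξ‖^(2*k) := by
        have h1 : ‖y + ξ - x‖ ≤ 2 * ‖ξ‖ := by
          have h2 : ‖y + ξ - x‖ ≤ ‖y - x‖ + ‖ξ‖ := by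
            have : y + ξ - x = (y - x) + ξ := by abel
            rw [this]; exact norm_add_le _ _
          have h3 : ‖y - x‖ ≤ 1 := by rwa [← dist_eq_norm]
          linarith
        calc Qf k x (y+ξ) ≤ (d:ℝ)^k * ‖y + ξ - x‖^(2*k) := Qf_le k x _
          _ ≤ (d:ℝ)^k * (2*‖ξ‖)^(2*k) := by
              refine mul_le_mul_of_nonneg_left ?_ hdknn
              exact pow_le_pow_left₀ (norm_nonneg _) h1 _
          _ = (d:ℝ)^k * 4^k * ‖ξ‖^(2*k) := by
              rw [mul_pow]
              have : (2:ℝ)^(2*k) = 4^k := by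
                rw [pow_mul]; norm_num
              rw [this, mul_assoc]
      have hQ2 : Qf k x y ≤ (d:ℝ)^k * ‖ξ‖^2 := by
        have h1 : ‖y - x‖ ≤ 1 := by rwa [← dist_eq_norm]
        have h2 : ‖y - x‖^(2*k) ≤ 1 := pow_le_one₀ (norm_nonneg _) h1
        have h3 : (1:ℝ) ≤ ‖ξ‖^2 := one_le_pow₀ hξ
        calc Qf k x y ≤ (d:ℝ)^k * ‖y - x‖^(2*k) := Qf_le k x _
          _ ≤ (d:ℝ)^k * 1 := mul_le_mul_of_nonneg_left h2 hdknn
          _ ≤ (d:ℝ)^k * ‖ξ‖^2 := mul_le_mul_of_nonneg_left h3 hdknn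
      have hQ3 : |fderiv ℝ (Qf k x) y ξ| ≤ Cg * ‖ξ‖^2 := by
        have h1 : |fderiv ℝ (Qf k x) y ξ| ≤ ‖fderiv ℝ (Qf k x) y‖ * ‖ξ‖ := by
          simpa [Real.norm_eq_abs] using
            ContinuousLinearMap.le_opNorm (fderiv ℝ (Qf k x) y) ξ
        have h2 : ‖fderiv ℝ (Qf k x) y‖ ≤ Cg :=
          le_trans (le_abs_self _) (hS2 x y hy)
        have h3 : ‖ξ‖ ≤ ‖ξ‖^2 := by nlinarith
        calc |fderiv ℝ (Qf k x) y ξ| ≤ ‖fderiv ℝ (Qf k x) y‖ * ‖ξ‖ := h1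
          _ ≤ Cg * ‖ξ‖^2 := by nlinarith [norm_nonneg (fderiv ℝ (Qf k x) y), norm_nonneg ξ]
      have hQnn1 := Qf_nonneg k x (y+ξ)
      have hQnn2 := Qf_nonneg k x y
      have habs : |Qf k x (y+ξ) - Qf k x y - fderiv ℝ (Qf k x) y ξ|
          ≤ Qf k x (y+ξ) + Qf k x y + |fderiv ℝ (Qf k x) y ξ| := by
        have t1 : |Qf k x (y+ξ) - Qf k x y - fderiv ℝ (Qf k x) y ξ|
            ≤ |Qf k x (y+ξ) - Qf k x y| + |fderiv ℝ (Qf k x) y ξ| := abs_sub _ _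
        have t2 : |Qf k x (y+ξ) - Qf k x y| ≤ |Qf k x (y+ξ)| + |Qf k x y| := abs_sub _ _
        rw [abs_of_nonneg hQnn1, abs_of_nonneg hQnn2] at t2
        linarith
      calc |Qf k x (y+ξ) - Qf k x y - fderiv ℝ (Qf k x) y ξ|
          ≤ Qf k x (y+ξ) + Qf k x y + |fderiv ℝ (Qf k x) y ξ| := habs
        _ ≤ (d:ℝ)^k * 4^k * ‖ξ‖^(2*k) + (d:ℝ)^k * ‖ξ‖^2 + Cg * ‖ξ‖^2 := by
            exact add_le_add (add_le_add hQ1 hQ2) hQ3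
        _ ≤ CB * (‖ξ‖^2 + ‖ξ‖^(2*k)) := by
            have e1 : CB * (‖ξ‖^2 + ‖ξ‖^(2*k)) =
                CB1 * (‖ξ‖^2 + ‖ξ‖^(2*k)) + ((d:ℝ)^k * 4^k) * ‖ξ‖^2
                + ((d:ℝ)^k * 4^k) * ‖ξ‖^(2*k) + (d:ℝ)^k * ‖ξ‖^2 + (d:ℝ)^k * ‖ξ‖^(2*k)
                + Cg * ‖ξ‖^2 + Cg * ‖ξ‖^(2*k) := by rw [hCBdef]; ring
            have e2 : 0 ≤ CB1 * (‖ξ‖^2 + ‖ξ‖^(2*k)) :=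
              mul_nonneg hCB1nn (by linarith)
            have e3 : 0 ≤ ((d:ℝ)^k * 4^k) * ‖ξ‖^2 :=
              mul_nonneg (mul_nonneg hdknn h4knn) hnn2
            have e4 : 0 ≤ (d:ℝ)^k * ‖ξ‖^(2*k) := mul_nonneg hdknn hnn2k
            have e5 : 0 ≤ Cg * ‖ξ‖^(2*k) := mul_nonneg hCgnn hnn2k
            linarith
  refine ⟨δ, CB, CA, hδpos, hδle1, hCBnn, hCAnn, hupper, ?_⟩
  -- lower bound
  intro y hy ξ
  have hnn2 : (0:ℝ) ≤ ‖ξ‖^2 := by positivity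
  have hnn2k : (0:ℝ) ≤ ‖ξ‖^(2*k) := by positivity
  rcases le_total ‖ξ‖ 2 with hξ | hξ
  · -- small ξ
    have hup := hupper y (hy.trans hδle1) ξ
    have h2k : ‖ξ‖^(2*k) ≤ (4:ℝ)^k * ‖ξ‖^2 := by
      obtain ⟨m, rfl⟩ : ∃ m, k = m + 1 := ⟨k - 1, by omega⟩
      have h1 : ‖ξ‖^2 ≤ 4 := by
        calc ‖ξ‖^2 ≤ 2^2 := pow_le_pow_left₀ (norm_nonneg ξ) hξ 2
          _ = 4 := by norm_num
      calc ‖ξ‖^(2*(m+1)) = (‖ξ‖^2)^(m+1) := by rw [pow_mul]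
        _ = ‖ξ‖^2 * (‖ξ‖^2)^m := by ring
        _ ≤ ‖ξ‖^2 * 4^m := by
            refine mul_le_mul_of_nonneg_left ?_ hnn2
            exact pow_le_pow_left₀ (by positivity) h1 m
        _ ≤ (4:ℝ)^(m+1) * ‖ξ‖^2 := by
            have : (4:ℝ)^m ≤ 4^(m+1) := by
              refine pow_le_pow_right₀ (by norm_num) (by omega)
            nlinarith
    have hlo : -(CB * (‖ξ‖^2 + ‖ξ‖^(2*k))) ≤
        Qf k x (y+ξ) - Qf k x y - fderiv ℝ (Qf k x) y ξ := (abs_le.mp hup).1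
    have e1 : (4:ℝ)^k * (-(CB * (‖ξ‖^2 + ‖ξ‖^(2*k)))) ≤
        (4:ℝ)^k * (Qf k x (y+ξ) - Qf k x y - fderiv ℝ (Qf k x) y ξ) :=
      mul_le_mul_of_nonneg_left hlo h4knn
    have e2 : CB * ‖ξ‖^(2*k) ≤ CB * ((4:ℝ)^k * ‖ξ‖^2) :=
      mul_le_mul_of_nonneg_left h2k hCBnn
    have e3 : (4:ℝ)^k * (CB * ‖ξ‖^(2*k)) ≤ (4:ℝ)^k * (CB * ((4:ℝ)^k * ‖ξ‖^2)) :=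
      mul_le_mul_of_nonneg_left e2 h4knn
    have e4 : CA * ‖ξ‖^2 = (4:ℝ)^k * ‖ξ‖^2 + (4:ℝ)^k * CB * ‖ξ‖^2
        + (4:ℝ)^k * CB * ((4:ℝ)^k * ‖ξ‖^2) + (4:ℝ)^k * ((d:ℝ)^k+1) * ‖ξ‖^2 := by
      rw [hCAdef]; ring
    have e5 : 0 ≤ (4:ℝ)^k * CB * ‖ξ‖^2 :=
      mul_nonneg (mul_nonneg h4knn hCBnn) hnn2
    have e6 : 0 ≤ (4:ℝ)^k * ((d:ℝ)^k+1) * ‖ξ‖^2 :=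
      mul_nonneg (mul_nonneg h4knn (by linarith)) hnn2
    nlinarith [e1, e3, h2k]
  · -- large ξ
    have hylex : ‖y - x‖ ≤ 1 := le_trans (by rwa [← dist_eq_norm]) hδle1
    have h1 : ‖ξ‖/2 ≤ ‖y + ξ - x‖ := by
      have h2 : ‖ξ‖ - ‖y - x‖ ≤ ‖(y - x) + ξ‖ := by
        have h2a : ‖ξ‖ ≤ ‖(y - x) + ξ‖ + ‖y - x‖ := by
          calc ‖ξ‖ = ‖((y - x) + ξ) - (y - x)‖ := by congr 1; abel
            _ ≤ ‖(y - x) + ξ‖ + ‖y - x‖ := norm_sub_le _ _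
        linarith
      have h3 : y + ξ - x = (y - x) + ξ := by abel
      rw [h3]; linarith
    have h4 : (‖ξ‖/2)^(2*k) ≤ ‖y + ξ - x‖^(2*k) :=
      pow_le_pow_left₀ (by positivity) h1 _
    have h5 : (‖ξ‖/2)^(2*k) = ‖ξ‖^(2*k) / 4^k := by
      rw [div_pow]
      have : (2:ℝ)^(2*k) = 4^k := by rw [pow_mul]; norm_num
      rw [this]
    have hQ1 : ‖ξ‖^(2*k) / 4^k ≤ Qf k x (y+ξ) := by
      rw [← h5]
      exact h4.trans (Qf_ge k x _)
    have hQ2 : Qf k x y ≤ (d:ℝ)^k := by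
      have h2 : ‖y - x‖^(2*k) ≤ 1 := pow_le_one₀ (norm_nonneg _) hylex
      calc Qf k x y ≤ (d:ℝ)^k * ‖y - x‖^(2*k) := Qf_le k x _
        _ ≤ (d:ℝ)^k * 1 := mul_le_mul_of_nonneg_left h2 hdknn
        _ = (d:ℝ)^k := mul_one _
    have hQ3 : fderiv ℝ (Qf k x) y ξ ≤ ‖ξ‖ := by
      have h1 : fderiv ℝ (Qf k x) y ξ ≤ |fderiv ℝ (Qf k x) y ξ| := le_abs_self _
      have h2 : |fderiv ℝ (Qf k x) y ξ| ≤ ‖fderiv ℝ (Qf k x) y‖ * ‖ξ‖ := by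
        simpa [Real.norm_eq_abs] using
          ContinuousLinearMap.le_opNorm (fderiv ℝ (Qf k x) y) ξ
      have h3 := hgrad_small y hy
      nlinarith [norm_nonneg ξ]
    have hξ1 : (1:ℝ) ≤ ‖ξ‖ := by linarith
    have hξsq : ‖ξ‖ ≤ ‖ξ‖^2 := by nlinarith
    have hd1 : (d:ℝ)^k ≤ (d:ℝ)^k * ‖ξ‖^2 := by nlinarith
    have key : ‖ξ‖^(2*k) / 4^k - (d:ℝ)^k - ‖ξ‖ ≤
        Qf k x (y+ξ) - Qf k x y - fderiv ℝ (Qf k x) y ξ := by linarith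
    have h4kpos : (0:ℝ) < (4:ℝ)^k := by positivity
    have hfin : ‖ξ‖^(2*k) ≤ (4:ℝ)^k * (Qf k x (y+ξ) - Qf k x y - fderiv ℝ (Qf k x) y ξ)
        + (4:ℝ)^k * ((d:ℝ)^k + 1) * ‖ξ‖^2 := by
      have h6 : (4:ℝ)^k * (‖ξ‖^(2*k) / 4^k) = ‖ξ‖^(2*k) := by
        field_simp
      have e1 := mul_le_mul_of_nonneg_left key h4knn
      have e2 : (4:ℝ)^k * ‖ξ‖ ≤ (4:ℝ)^k * ‖ξ‖^2 := mul_le_mul_of_nonneg_left hξsq h4knn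
      have e3 : (4:ℝ)^k * (d:ℝ)^k ≤ (4:ℝ)^k * ((d:ℝ)^k * ‖ξ‖^2) :=
        mul_le_mul_of_nonneg_left hd1 h4knn
      nlinarith [e1]
    refine hfin.trans ?_
    have e7 : (4:ℝ)^k * ((d:ℝ)^k + 1) ≤ CA := by
      have e8 : 0 ≤ (4:ℝ)^k * CB * (1 + (4:ℝ)^k) :=
        mul_nonneg (mul_nonneg h4knn hCBnn) (by linarith)
      rw [hCAdef]; linarith
    have e9 : (4:ℝ)^k * ((d:ℝ)^k + 1) * ‖ξ‖^2 ≤ CA * ‖ξ‖^2 :=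
      mul_le_mul_of_nonneg_right e7 hnn2
    linarith


/-- if `𝒢` is polynomial on `E` and `f ∈ C^k(ℝ^d)` has growth
`|f(x)| ≤ c(1+‖x‖^k)` for some `k ≥ 2`, then the Taylor remainder of order `k−1`
satisfies `|g(x,ξ)| ≤ ‖ξ‖^k M(x)` for a continuous `M`, the jump integrand of `𝒢f`
is integrable, and `𝒢f` is locally bounded on `E`. -/
theorem stmt16 {d : ℕ} (E : Set (Fin d → ℝ))
    (a : (Fin d → ℝ) → Matrix (Fin d) (Fin d) ℝ)
    (b : (Fin d → ℝ) → Fin d → ℝ)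
    (ν : (Fin d → ℝ) → Measure (Fin d → ℝ))
    (hpsd : ∀ x, (a x).PosSemidef)
    (hν0 : ∀ x, ν x ({0} : Set (Fin d → ℝ)) = 0)
    (hmom : ∀ x ∈ E, ∀ n : ℕ, 2 ≤ n → Integrable (fun ξ => ‖ξ‖ ^ n) (ν x))
    (hvanish : ∀ p : MvPolynomial (Fin d) ℝ, (∀ x ∈ E, MvPolynomial.eval x p = 0) →
      ∀ x ∈ E, jdOp a b ν (fun y => MvPolynomial.eval y p) x = 0)
    (hmap : ∀ n : ℕ, ∀ p : MvPolynomial (Fin d) ℝ, p.totalDegree ≤ n →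
      ∃ r : MvPolynomial (Fin d) ℝ, r.totalDegree ≤ n ∧
        ∀ x ∈ E, MvPolynomial.eval x r =
          jdOp a b ν (fun y => MvPolynomial.eval y p) x)
    (k : ℕ) (hk : 2 ≤ k)
    (f : (Fin d → ℝ) → ℝ) (hf : ContDiff ℝ (k : ℕ∞) f)
    (c : ℝ) (hgrowth : ∀ x, |f x| ≤ c * (1 + ‖x‖ ^ k)) :
    (∃ M : (Fin d → ℝ) → ℝ, Continuous M ∧
      ∀ x ξ : Fin d → ℝ,
        |f (x + ξ) - ∑ j ∈ Finset.range k,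
            (1 / (j.factorial : ℝ)) * iteratedFDeriv ℝ j f x (fun _ => ξ)| ≤
          ‖ξ‖ ^ k * M x) ∧
    (∀ x ∈ E, Integrable
      (fun ξ => f (x + ξ) - f x - ∑ i, ξ i * fderiv ℝ f x (Pi.single i 1)) (ν x)) ∧
    (∀ x ∈ E, ∃ U ∈ nhds x, ∃ C : ℝ, ∀ y ∈ U ∩ E, |jdOp a b ν f y| ≤ C) := by
  obtain ⟨M, hMc, hMnn, hM⟩ := global_taylor_bound hk hf hgrowth
  have part2 : ∀ x ∈ E, Integrable
      (fun ξ => f (x + ξ) - f x - ∑ i, ξ i * fderiv ℝ f x (Pi.single i 1)) (ν x) :=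
    fun x hx => jump_integrand_integrable hk hf hM (ν x) (fun n hn => hmom x hx n hn) x
  refine ⟨⟨M, hMc, hM⟩, part2, ?_⟩
  intro x hxE
  have hk1 : 1 ≤ k := by omega
  -- b representation
  have hr1ex : ∀ i : Fin d, ∃ r : MvPolynomial (Fin d) ℝ,
      ∀ y ∈ E, MvPolynomial.eval y r = b y i := by
    intro i
    obtain ⟨r, _, hr⟩ := hmap 1 (MvPolynomial.X i) (le_of_eq (MvPolynomial.totalDegree_X i))
    exact ⟨r, fun y hy => by rw [hr y hy, jdOp_X]⟩
  choose r1 hr1 using hr1ex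
  have hr2ex : ∀ i : Fin d, ∃ r : MvPolynomial (Fin d) ℝ, ∀ y ∈ E,
      MvPolynomial.eval y r = a y i i + 2 * (b y i * y i) + ∫ ξ, (ξ i)^2 ∂(ν y) := by
    intro i
    obtain ⟨r, _, hr⟩ := hmap 2 (MvPolynomial.X i * MvPolynomial.X i) (by
      refine (MvPolynomial.totalDegree_mul _ _).trans ?_
      rw [MvPolynomial.totalDegree_X])
    exact ⟨r, fun y hy => by rw [hr y hy, jdOp_XX]⟩
  choose r2 hr2 using hr2ex
  set A : Fin d → (Fin d → ℝ) → ℝ := fun i y =>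
    MvPolynomial.eval y (r2 i) - 2 * (MvPolynomial.eval y (r1 i) * y i) with hAdef
  have hAcont : ∀ i, Continuous (A i) := fun i =>
    (MvPolynomial.continuous_eval _).sub
      (continuous_const.mul ((MvPolynomial.continuous_eval _).mul (continuous_apply i)))
  -- coordinate squares integrable
  have hsqInt : ∀ y ∈ E, ∀ i, Integrable (fun ξ : Fin d → ℝ => (ξ i)^2) (ν y) := by
    intro y hy i
    refine (hmom y hy 2 le_rfl).mono' ?_ ?_
    · exact ((continuous_apply i).pow 2).aestronglyMeasurable
    · filter_upwards with ξ
      rw [Real.norm_eq_abs, abs_of_nonneg (sq_nonneg _)]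
      have h1 : |ξ i| ≤ ‖ξ‖ := by simpa using norm_le_pi_norm ξ i
      calc (ξ i)^2 = |ξ i|^2 := (sq_abs _).symm
        _ ≤ ‖ξ‖^2 := pow_le_pow_left₀ (abs_nonneg _) h1 2
  -- diagonal facts
  have hfacts : ∀ y ∈ E, ∀ i,
      a y i i ≤ A i y ∧ (∫ ξ, (ξ i)^2 ∂ν y) ≤ A i y ∧ 0 ≤ A i y := by
    intro y hy i
    have h1 := hr2 i y hy
    have h2 := hr1 i y hy
    have h3 : 0 ≤ ∫ ξ, (ξ i)^2 ∂ν y := integral_nonneg fun ξ => sq_nonneg _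
    have h4 := psd_diag_nonneg (hpsd y) i
    have h5 : A i y = a y i i + (∫ ξ, (ξ i)^2 ∂ν y) := by
      simp only [hAdef]
      rw [h1, h2]; ring
    exact ⟨by linarith, by linarith, by linarith⟩
  clear_value A
  have habs_a : ∀ y ∈ E, ∀ i j, |a y i j| ≤ (A i y + A j y)/2 := by
    intro y hy i j
    have h0 := psd_abs_le (hpsd y) i j
    have h1 := (hfacts y hy i).1
    have h2 := (hfacts y hy j).1
    refine h0.trans ?_
    linarith
  have hI2 : ∀ y ∈ E, (∫ ξ, ‖ξ‖^2 ∂ν y) ≤ ∑ i, A i y := by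
    intro y hy
    calc ∫ ξ, ‖ξ‖^2 ∂ν y ≤ ∫ ξ, (∑ i, (ξ i)^2) ∂ν y :=
          integral_mono (hmom y hy 2 le_rfl)
            (integrable_finset_sum _ fun i _ => hsqInt y hy i)
            (fun ξ => sq_norm_le_sum_sq ξ)
      _ = ∑ i, ∫ ξ, (ξ i)^2 ∂ν y := integral_finset_sum _ (fun i _ => hsqInt y hy i)
      _ ≤ ∑ i, A i y := Finset.sum_le_sum fun i _ => (hfacts y hy i).2.1
  -- the comparison polynomial
  set p : MvPolynomial (Fin d) ℝ :=
    (∑ i, (MvPolynomial.X i - MvPolynomial.C (x i))^2)^k with hpdef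
  have hpeval : (fun z : Fin d → ℝ => MvPolynomial.eval z p) = Qf k x := by
    funext z
    simp [hpdef, Qf]
  have hpdeg : p.totalDegree ≤ 2*k := by
    calc p.totalDegree ≤ k * (∑ i, (MvPolynomial.X i - MvPolynomial.C (x i))^2).totalDegree :=
          MvPolynomial.totalDegree_pow _ _
      _ ≤ k * 2 := by
          refine Nat.mul_le_mul_left k ?_
          refine (MvPolynomial.totalDegree_finset_sum _ _).trans ?_
          refine Finset.sup_le fun i _ => ?_
          refine (MvPolynomial.totalDegree_pow _ _).trans ?_
          have h1 : (MvPolynomial.X i - MvPolynomial.C (x i) :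
              MvPolynomial (Fin d) ℝ).totalDegree ≤ 1 := by
            rw [sub_eq_add_neg]
            refine (MvPolynomial.totalDegree_add _ _).trans ?_
            rw [MvPolynomial.totalDegree_neg]
            simp [MvPolynomial.totalDegree_X, MvPolynomial.totalDegree_C]
          omega
      _ = 2*k := by ring
  obtain ⟨rp, _, hrp0⟩ := hmap (2*k) p hpdeg
  have hrp : ∀ y ∈ E, MvPolynomial.eval y rp = jdOp a b ν (Qf k x) y := by
    intro y hy
    rw [hrp0 y hy, hpeval]
  obtain ⟨δ, CB, CA, hδpos, hδle1, hCBnn, hCAnn, hupper, hlower⟩ := qf_bounds hk1 x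
  -- derivative functions
  set Dff : Fin d → (Fin d → ℝ) → ℝ := fun i y => fderiv ℝ f y (Pi.single i 1) with hDffdef
  set D2ff : Fin d → Fin d → (Fin d → ℝ) → ℝ := fun i j y =>
    fderiv ℝ (fun w => fderiv ℝ f w (Pi.single j 1)) y (Pi.single i 1) with hD2ffdef
  set DPf : Fin d → (Fin d → ℝ) → ℝ := fun i y =>
    fderiv ℝ (Qf k x) y (Pi.single i 1) with hDPdef
  set D2Pf : Fin d → Fin d → (Fin d → ℝ) → ℝ := fun i j y =>
    fderiv ℝ (fun w => fderiv ℝ (Qf k x) w (Pi.single j 1)) y (Pi.single i 1) with hD2Pdef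
  have hDffcont : ∀ i, Continuous (Dff i) := fun i =>
    (hf.continuous_fderiv (by norm_cast; omega)).clm_apply continuous_const
  have hcast2 : ((1 : WithTop ℕ∞) + 1) ≤ ((k : ℕ∞) : WithTop ℕ∞) := by
    have h2 : ((2:ℕ) : WithTop ℕ∞) ≤ ((k : ℕ) : WithTop ℕ∞) := by exact_mod_cast hk
    have h3 : ((1 : WithTop ℕ∞) + 1) = ((2:ℕ) : WithTop ℕ∞) := by norm_cast
    rw [h3]; exact h2
  have hD2ffcont : ∀ i j, Continuous (D2ff i j) := by
    intro i j
    have h1 : ContDiff ℝ 1 (fun w => fderiv ℝ f w (Pi.single j 1)) :=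
      (hf.fderiv_right (m := 1) hcast2).clm_apply contDiff_const
    exact (h1.continuous_fderiv one_ne_zero).clm_apply continuous_const
  have hDPcont : ∀ i, Continuous (DPf i) := fun i =>
    ((Qf_contDiff k x 2).continuous_fderiv (by norm_num)).clm_apply continuous_const
  have hD2Pcont : ∀ i j, Continuous (D2Pf i j) := by
    intro i j
    have h1 : ContDiff ℝ 1 (fun w => fderiv ℝ (Qf k x) w (Pi.single j 1)) :=
      ((Qf_contDiff k x 2).fderiv_right (by norm_num)).clm_apply contDiff_const
    exact (h1.continuous_fderiv one_ne_zero).clm_apply continuous_const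
  -- Q jump integrand integrable
  have hQint : ∀ y ∈ E, dist y x ≤ 1 → Integrable
      (fun ξ => Qf k x (y + ξ) - Qf k x y -
        ∑ i, ξ i * fderiv ℝ (Qf k x) y (Pi.single i 1)) (ν y) := by
    intro y hy hyd
    have hbnd : Integrable (fun ξ : Fin d → ℝ => CB * (‖ξ‖^2 + ‖ξ‖^(2*k))) (ν y) :=
      ((hmom y hy 2 le_rfl).add (hmom y hy (2*k) (by omega))).const_mul CB
    refine hbnd.mono' ?_ ?_
    · have hQc : Continuous (Qf k x) := (Qf_contDiff k x 0).continuous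
      refine Continuous.aestronglyMeasurable ?_
      refine ((hQc.comp (continuous_const.add continuous_id)).sub continuous_const).sub ?_
      exact continuous_finset_sum _ fun i _ => (continuous_apply i).mul continuous_const
    · filter_upwards with ξ
      rw [Real.norm_eq_abs, clm_sum_single]
      exact hupper y hyd ξ
  set T1P : (Fin d → ℝ) → ℝ := fun y => (1/2) * ∑ i, ∑ j, a y i j * D2Pf i j y with hT1Pdef
  set T2P : (Fin d → ℝ) → ℝ := fun y => ∑ i, b y i * DPf i y with hT2Pdef
  have hEqQ : ∀ y ∈ E, (∫ ξ, (Qf k x (y + ξ) - Qf k x y -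
      ∑ i, ξ i * fderiv ℝ (Qf k x) y (Pi.single i 1)) ∂ν y)
      = MvPolynomial.eval y rp - T1P y - T2P y := by
    intro y hy
    have h0 : MvPolynomial.eval y rp = T1P y + T2P y + ∫ ξ, (Qf k x (y + ξ) - Qf k x y -
        ∑ i, ξ i * fderiv ℝ (Qf k x) y (Pi.single i 1)) ∂ν y := by
      rw [hrp y hy]; rfl
    linarith
  have hI2k : ∀ y ∈ E, dist y x ≤ δ → (∫ ξ, ‖ξ‖^(2*k) ∂ν y) ≤
      (4:ℝ)^k * (MvPolynomial.eval y rp - T1P y - T2P y) + CA * ∑ i, A i y := by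
    intro y hy hyd
    have hyd1 : dist y x ≤ 1 := hyd.trans hδle1
    have hint1 := hQint y hy hyd1
    have hmono : (∫ ξ, ‖ξ‖^(2*k) ∂ν y) ≤ ∫ ξ, ((4:ℝ)^k * (Qf k x (y + ξ) - Qf k x y -
        ∑ i, ξ i * fderiv ℝ (Qf k x) y (Pi.single i 1)) + CA * ‖ξ‖^2) ∂ν y := by
      refine integral_mono (hmom y hy (2*k) (by omega))
        ((hint1.const_mul _).add ((hmom y hy 2 le_rfl).const_mul _)) (fun ξ => ?_)
      have h1 := hlower y hyd ξ
      rw [clm_sum_single]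
      exact h1
    rw [integral_add (hint1.const_mul _) ((hmom y hy 2 le_rfl).const_mul _),
      integral_const_mul, integral_const_mul, hEqQ y hy] at hmono
    have h2 := hI2 y hy
    have h3 : CA * ∫ ξ, ‖ξ‖^2 ∂ν y ≤ CA * ∑ i, A i y := mul_le_mul_of_nonneg_left h2 hCAnn
    linarith
  -- W and the pointwise bound for the f-integrand
  set W : (Fin d → ℝ) → ℝ := fun y =>
    M y + ∑ j ∈ Finset.Ico 2 k, ‖iteratedFDeriv ℝ j f y‖ with hWdef
  have hWcont : Continuous W := by
    refine hMc.add (continuous_finset_sum _ fun j hj => ?_)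
    have hjk : (j : ℕ∞) ≤ (k : ℕ∞) := by
      have := (Finset.mem_Ico.mp hj).2
      exact_mod_cast Nat.le_of_lt this
    exact (hf.continuous_iteratedFDeriv (by exact_mod_cast hjk)).norm
  have hWnn : ∀ y, 0 ≤ W y := fun y =>
    add_nonneg (hMnn y) (Finset.sum_nonneg fun j _ => norm_nonneg _)
  have hintbd : ∀ y ξ : Fin d → ℝ, |f (y + ξ) - f y - fderiv ℝ f y ξ| ≤
      W y * (‖ξ‖^2 + ‖ξ‖^(2*k)) := by
    intro y ξ
    rw [taylor_decomp hk f y ξ]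
    have hstnn : (0:ℝ) ≤ ‖ξ‖^2 + ‖ξ‖^(2*k) := by positivity
    have h1 : |f (y + ξ) - ∑ j ∈ Finset.range k,
        (1 / (j.factorial : ℝ)) * iteratedFDeriv ℝ j f y (fun _ => ξ)| ≤
        (‖ξ‖^2 + ‖ξ‖^(2*k)) * M y := by
      refine (hM y ξ).trans ?_
      refine mul_le_mul_of_nonneg_right ?_ (hMnn y)
      exact pow_le_sq_add_pow (norm_nonneg _) hk (by omega)
    have h2 : |∑ j ∈ Finset.Ico 2 k,
        (1 / (j.factorial : ℝ)) * iteratedFDeriv ℝ j f y (fun _ => ξ)| ≤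
        (∑ j ∈ Finset.Ico 2 k, ‖iteratedFDeriv ℝ j f y‖) * (‖ξ‖^2 + ‖ξ‖^(2*k)) := by
      refine (Finset.abs_sum_le_sum_abs _ _).trans ?_
      rw [Finset.sum_mul]
      refine Finset.sum_le_sum fun j hj => ?_
      have hj2 := (Finset.mem_Ico.mp hj).1
      have hjk := (Finset.mem_Ico.mp hj).2
      refine (term_bound f j y ξ).trans ?_
      exact mul_le_mul_of_nonneg_left
        (pow_le_sq_add_pow (norm_nonneg _) hj2 (by omega)) (norm_nonneg _)
    calc |_| ≤ |f (y + ξ) - ∑ j ∈ Finset.range k,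
          (1 / (j.factorial : ℝ)) * iteratedFDeriv ℝ j f y (fun _ => ξ)|
        + |∑ j ∈ Finset.Ico 2 k,
            (1 / (j.factorial : ℝ)) * iteratedFDeriv ℝ j f y (fun _ => ξ)| := abs_add_le _ _
      _ ≤ (‖ξ‖^2 + ‖ξ‖^(2*k)) * M y +
          (∑ j ∈ Finset.Ico 2 k, ‖iteratedFDeriv ℝ j f y‖) * (‖ξ‖^2 + ‖ξ‖^(2*k)) :=
          add_le_add h1 h2
      _ = W y * (‖ξ‖^2 + ‖ξ‖^(2*k)) := by rw [hWdef]; ring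
  -- bound functions
  set T1bf : (Fin d → ℝ) → ℝ := fun y =>
    (1/2) * ∑ i, ∑ j, ((A i y + A j y)/2) * |D2ff i j y| with hT1bfdef
  set T2bf : (Fin d → ℝ) → ℝ := fun y =>
    ∑ i, |MvPolynomial.eval y (r1 i)| * |Dff i y| with hT2bfdef
  set T1bP : (Fin d → ℝ) → ℝ := fun y =>
    (1/2) * ∑ i, ∑ j, ((A i y + A j y)/2) * |D2Pf i j y| with hT1bPdef
  set T2bP : (Fin d → ℝ) → ℝ := fun y =>
    ∑ i, |MvPolynomial.eval y (r1 i)| * |DPf i y| with hT2bPdef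
  set Φ : (Fin d → ℝ) → ℝ := fun y =>
    T1bf y + T2bf y + W y * ((1 + CA) * (∑ i, A i y)
      + (4:ℝ)^k * (|MvPolynomial.eval y rp| + T1bP y + T2bP y)) with hΦdef
  have hΦcont : Continuous Φ := by
    refine Continuous.add (Continuous.add ?_ ?_) (Continuous.mul hWcont (Continuous.add ?_ ?_))
    · exact continuous_const.mul (continuous_finset_sum _ fun i _ =>
        continuous_finset_sum _ fun j _ =>
          (((hAcont i).add (hAcont j)).div_const 2).mul (hD2ffcont i j).abs)
    · exact continuous_finset_sum _ fun i _ =>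
        (MvPolynomial.continuous_eval _).abs.mul (hDffcont i).abs
    · exact continuous_const.mul (continuous_finset_sum _ fun i _ => hAcont i)
    · refine continuous_const.mul (Continuous.add (Continuous.add
        (MvPolynomial.continuous_eval _).abs ?_) ?_)
      · exact continuous_const.mul (continuous_finset_sum _ fun i _ =>
          continuous_finset_sum _ fun j _ =>
            (((hAcont i).add (hAcont j)).div_const 2).mul (hD2Pcont i j).abs)
      · exact continuous_finset_sum _ fun i _ =>
          (MvPolynomial.continuous_eval _).abs.mul (hDPcont i).abs
  -- main pointwise bound
  have hmain : ∀ y ∈ E, dist y x ≤ δ → |jdOp a b ν f y| ≤ Φ y := by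
    intro y hyE hyd
    have hjd : jdOp a b ν f y = (1/2) * (∑ i, ∑ j, a y i j * D2ff i j y)
        + (∑ i, b y i * Dff i y)
        + ∫ ξ, (f (y + ξ) - f y - ∑ i, ξ i * fderiv ℝ f y (Pi.single i 1)) ∂ν y := rfl
    have hT1 : |(1/2) * (∑ i, ∑ j, a y i j * D2ff i j y)| ≤ T1bf y := by
      rw [hT1bfdef, abs_mul, abs_of_nonneg (by norm_num : (0:ℝ) ≤ 1/2)]
      refine mul_le_mul_of_nonneg_left ?_ (by norm_num)
      refine (Finset.abs_sum_le_sum_abs _ _).trans ?_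
      refine Finset.sum_le_sum fun i _ => ?_
      refine (Finset.abs_sum_le_sum_abs _ _).trans ?_
      refine Finset.sum_le_sum fun j _ => ?_
      rw [abs_mul]
      exact mul_le_mul_of_nonneg_right (habs_a y hyE i j) (abs_nonneg _)
    have hT2 : |∑ i, b y i * Dff i y| ≤ T2bf y := by
      rw [hT2bfdef]
      refine (Finset.abs_sum_le_sum_abs _ _).trans ?_
      refine Finset.sum_le_sum fun i _ => ?_
      rw [abs_mul, hr1 i y hyE]
    have hT1Pb : |T1P y| ≤ T1bP y := by
      rw [hT1Pdef, hT1bPdef, abs_mul, abs_of_nonneg (by norm_num : (0:ℝ) ≤ 1/2)]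
      refine mul_le_mul_of_nonneg_left ?_ (by norm_num)
      refine (Finset.abs_sum_le_sum_abs _ _).trans ?_
      refine Finset.sum_le_sum fun i _ => ?_
      refine (Finset.abs_sum_le_sum_abs _ _).trans ?_
      refine Finset.sum_le_sum fun j _ => ?_
      rw [abs_mul]
      exact mul_le_mul_of_nonneg_right (habs_a y hyE i j) (abs_nonneg _)
    have hT2Pb : |T2P y| ≤ T2bP y := by
      rw [hT2Pdef, hT2bPdef]
      refine (Finset.abs_sum_le_sum_abs _ _).trans ?_
      refine Finset.sum_le_sum fun i _ => ?_
      rw [abs_mul, hr1 i y hyE]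
    have hIf : |∫ ξ, (f (y + ξ) - f y - ∑ i, ξ i * fderiv ℝ f y (Pi.single i 1)) ∂ν y| ≤
        W y * ((1 + CA) * (∑ i, A i y)
          + (4:ℝ)^k * (|MvPolynomial.eval y rp| + T1bP y + T2bP y)) := by
      have hstep1 : |∫ ξ, (f (y + ξ) - f y -
          ∑ i, ξ i * fderiv ℝ f y (Pi.single i 1)) ∂ν y| ≤
          ∫ ξ, |f (y + ξ) - f y - ∑ i, ξ i * fderiv ℝ f y (Pi.single i 1)| ∂ν y := by
        have := norm_integral_le_integral_norm
          (fun ξ => f (y + ξ) - f y - ∑ i, ξ i * fderiv ℝ f y (Pi.single i 1)) (μ := ν y)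
        simpa [Real.norm_eq_abs] using this
      have hstep2 : (∫ ξ, |f (y + ξ) - f y -
          ∑ i, ξ i * fderiv ℝ f y (Pi.single i 1)| ∂ν y) ≤
          ∫ ξ, W y * (‖ξ‖^2 + ‖ξ‖^(2*k)) ∂ν y := by
        refine integral_mono (part2 y hyE).abs
          (((hmom y hyE 2 le_rfl).add (hmom y hyE (2*k) (by omega))).const_mul _)
          (fun ξ => ?_)
        have h1 := hintbd y ξ
        rw [clm_sum_single] at *
        exact h1
      have hstep3 : (∫ ξ, W y * (‖ξ‖^2 + ‖ξ‖^(2*k)) ∂ν y) =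
          W y * ((∫ ξ, ‖ξ‖^2 ∂ν y) + ∫ ξ, ‖ξ‖^(2*k) ∂ν y) := by
        rw [integral_const_mul, integral_add (hmom y hyE 2 le_rfl)
          (hmom y hyE (2*k) (by omega))]
      have h4 : (∫ ξ, ‖ξ‖^2 ∂ν y) + (∫ ξ, ‖ξ‖^(2*k) ∂ν y) ≤
          (1 + CA) * (∑ i, A i y)
          + (4:ℝ)^k * (|MvPolynomial.eval y rp| + T1bP y + T2bP y) := by
        have ha := hI2 y hyE
        have hb := hI2k y hyE hyd
        have hc : MvPolynomial.eval y rp - T1P y - T2P y ≤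
            |MvPolynomial.eval y rp| + T1bP y + T2bP y := by
          have := le_abs_self (MvPolynomial.eval y rp)
          have h5 := neg_abs_le (T1P y)
          have h6 := neg_abs_le (T2P y)
          linarith
        have hd : (4:ℝ)^k * (MvPolynomial.eval y rp - T1P y - T2P y) ≤
            (4:ℝ)^k * (|MvPolynomial.eval y rp| + T1bP y + T2bP y) :=
          mul_le_mul_of_nonneg_left hc (by positivity)
        nlinarith [hCAnn, ha]
      calc |∫ ξ, (f (y + ξ) - f y - ∑ i, ξ i * fderiv ℝ f y (Pi.single i 1)) ∂ν y|
          ≤ ∫ ξ, |f (y + ξ) - f y - ∑ i, ξ i * fderiv ℝ f y (Pi.single i 1)| ∂ν y := hstep1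
        _ ≤ W y * ((∫ ξ, ‖ξ‖^2 ∂ν y) + ∫ ξ, ‖ξ‖^(2*k) ∂ν y) := by
            rw [← hstep3]; exact hstep2
        _ ≤ W y * ((1 + CA) * (∑ i, A i y)
            + (4:ℝ)^k * (|MvPolynomial.eval y rp| + T1bP y + T2bP y)) :=
            mul_le_mul_of_nonneg_left h4 (hWnn y)
    rw [hjd]
    have hΦy : Φ y = T1bf y + T2bf y + W y * ((1 + CA) * (∑ i, A i y)
      + (4:ℝ)^k * (|MvPolynomial.eval y rp| + T1bP y + T2bP y)) := rfl
    rw [hΦy]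
    have habs2 : |(1/2) * (∑ i, ∑ j, a y i j * D2ff i j y) + (∑ i, b y i * Dff i y)
        + ∫ ξ, (f (y + ξ) - f y - ∑ i, ξ i * fderiv ℝ f y (Pi.single i 1)) ∂ν y| ≤
        |(1/2) * (∑ i, ∑ j, a y i j * D2ff i j y)| + |∑ i, b y i * Dff i y|
        + |∫ ξ, (f (y + ξ) - f y - ∑ i, ξ i * fderiv ℝ f y (Pi.single i 1)) ∂ν y| := by
      refine (abs_add_le _ _).trans ?_
      have := abs_add_le ((1/2) * (∑ i, ∑ j, a y i j * D2ff i j y)) (∑ i, b y i * Dff i y)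
      linarith
    clear_value Φ T1bf T2bf T1bP T2bP W T1P T2P Dff D2ff DPf D2Pf
    linarith
  -- conclusion
  obtain ⟨z₀, hz₀mem, hz₀⟩ := (isCompact_closedBall x δ).exists_isMaxOn
    ⟨x, Metric.mem_closedBall_self hδpos.le⟩ hΦcont.continuousOn
  refine ⟨Metric.ball x δ, Metric.ball_mem_nhds x hδpos, Φ z₀, ?_⟩
  rintro y ⟨hyball, hyE⟩
  have hyd : dist y x ≤ δ := le_of_lt (Metric.mem_ball.mp hyball)
  refine (hmain y hyE hyd).trans ?_
  exact hz₀ (Metric.mem_closedBall.mpr hyd)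


end
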